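/- arXiv:1408.2277 — 3 statements merged into one kernel-verified Lean document; each statement's English description precedes it below -/
import Mathlib

section
/- For all natural numbers n, i_{2n} = i_n · t_n and i_{2n+1} = i_n, where (t_n) is the Thue–Morse sequence t_n = (-1)^{s_2(n)}. -/
/-- `inv2 n` is the number of inversions in the binary representation of `n`,
i.e. the number of pairs of bit positions `a > b` such that bit `a` of `n` is `1`
and bit `b` of `n` is `0`. -/
def inv2 (n : ℕ) : ℕ :=
  ((Finset.range (n + 1) ×ˢ Finset.range (n + 1)).filter
    (fun p => p.2 < p.1 ∧ n.testBit p.1 = true ∧ n.testBit p.2 = false)).card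

/-- `iSeq n = (-1)^(inv2 n)`. -/
def iSeq (n : ℕ) : ℤ := (-1) ^ inv2 n

/-- The Thue–Morse sequence `t n = (-1)^(s₂ n)`, where `s₂ n` is the sum of the
binary digits of `n`. -/
def tm (n : ℕ) : ℤ := (-1) ^ (Nat.digits 2 n).sum

lemma testBit_lt {n a : ℕ} (h : n.testBit a = true) : a < n :=
  lt_of_lt_of_le (Nat.lt_two_pow_self (n := a)) (Nat.ge_two_pow_of_testBit h)

lemma testBit_le {n a : ℕ} (h : n.testBit a = true) : a ≤ n :=
  le_of_lt (testBit_lt h)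

/-- number of set bits, counted in `range (n+1)` -/
def ones (n : ℕ) : ℕ := ((Finset.range (n + 1)).filter (fun a => n.testBit a = true)).card

lemma ones_eq_digitsSum (n : ℕ) : ones n = (Nat.digits 2 n).sum := by
  induction n using Nat.strong_induction_on with
  | _ n ih =>
    rcases Nat.eq_zero_or_pos n with h0 | h0
    · subst h0; simp [ones]
    · have hd : Nat.digits 2 n = n % 2 :: Nat.digits 2 (n / 2) :=
        Nat.digits_def' (by norm_num) h0
      rw [hd]
      have hrec : ones (n / 2) = (Nat.digits 2 (n / 2)).sum :=
        ih (n / 2) (Nat.div_lt_self h0 (by norm_num))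
      simp only [List.sum_cons, ← hrec]
      -- split ones n on a = 0
      unfold ones
      rw [← Finset.card_filter_add_card_filter_not (s :=
        (Finset.range (n + 1)).filter (fun a => n.testBit a = true)) (fun a => a = 0)]
      congr 1
      · -- card of {a = 0} part equals n % 2
        rcases Nat.even_or_odd n with he | ho
        · have : n.testBit 0 = false := by
            simp [Nat.testBit_zero, Nat.even_iff.mp he]
          rw [Nat.even_iff.mp he]
          rw [Finset.card_eq_zero]
          ext a
          simp only [Finset.mem_filter, Finset.mem_range, Finset.notMem_empty, iff_false]
          rintro ⟨⟨-, hb⟩, rfl⟩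
          rw [this] at hb; exact Bool.noConfusion hb
        · have : n.testBit 0 = true := by
            simp [Nat.testBit_zero, Nat.odd_iff.mp ho]
          rw [Nat.odd_iff.mp ho]
          rw [Finset.card_eq_one]
          refine ⟨0, ?_⟩
          ext a
          simp only [Finset.mem_filter, Finset.mem_range, Finset.mem_singleton]
          constructor
          · rintro ⟨-, rfl⟩; rfl
          · rintro rfl; exact ⟨⟨Nat.succ_pos _, this⟩, rfl⟩
      · -- shift bijection with ones (n/2)
        apply Finset.card_nbij' (fun a => a - 1) (fun a => a + 1)
        · rintro a ha
          simp only [Finset.mem_coe, Finset.mem_filter, Finset.mem_range] at ha ⊢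
          obtain ⟨⟨-, hb⟩, hne⟩ := ha
          obtain ⟨k, rfl⟩ := Nat.exists_eq_succ_of_ne_zero hne
          rw [Nat.testBit_add_one] at hb
          exact ⟨Nat.lt_succ_of_le (testBit_le hb), by simpa using hb⟩
        · rintro a ha
          simp only [Finset.mem_coe, Finset.mem_filter, Finset.mem_range] at ha ⊢
          obtain ⟨-, hb⟩ := ha
          refine ⟨⟨?_, by rwa [Nat.testBit_add_one]⟩, Nat.succ_ne_zero a⟩
          have : a ≤ n / 2 := testBit_le hb
          omega
        · rintro a ha
          simp only [Finset.mem_coe, Finset.mem_filter] at ha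
          dsimp only
          omega
        · intro a _; simp

lemma testBit_two_mul_zero (n : ℕ) : (2 * n).testBit 0 = false := by
  simp [Nat.testBit_zero, Nat.mul_mod_right]

lemma testBit_two_mul_succ (n a : ℕ) : (2 * n).testBit (a + 1) = n.testBit a := by
  rw [Nat.testBit_add_one, Nat.mul_div_cancel_left _ (by norm_num)]

lemma testBit_two_mul_add_one_succ (n a : ℕ) :
    (2 * n + 1).testBit (a + 1) = n.testBit a := by
  rw [Nat.testBit_add_one]
  congr 1
  omega

lemma inv2_two_mul (n : ℕ) : inv2 (2 * n) = inv2 n + ones n := by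
  unfold inv2
  rw [← Finset.card_filter_add_card_filter_not
    (s := (Finset.range (2 * n + 1) ×ˢ Finset.range (2 * n + 1)).filter
      (fun p => p.2 < p.1 ∧ (2 * n).testBit p.1 = true ∧ (2 * n).testBit p.2 = false))
    (fun p => p.2 = 0), Nat.add_comm]
  congr 1
  · -- p.2 ≠ 0 part ↔ inv2 n
    apply Finset.card_nbij' (fun p => (p.1 - 1, p.2 - 1)) (fun p => (p.1 + 1, p.2 + 1))
    · rintro ⟨a, b⟩ h
      simp only [Finset.mem_coe, Finset.mem_filter, Finset.mem_product, Finset.mem_range] at h ⊢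
      obtain ⟨⟨-, hlt, ha, hb⟩, hne⟩ := h
      obtain ⟨k, rfl⟩ := Nat.exists_eq_succ_of_ne_zero hne
      obtain ⟨l, rfl⟩ : ∃ l, a = l + 1 := ⟨a - 1, by omega⟩
      rw [testBit_two_mul_succ] at ha hb
      simp only [Nat.add_sub_cancel]
      have hl : l ≤ n := testBit_le ha
      exact ⟨⟨by omega, by omega⟩, by omega, ha, hb⟩
    · rintro ⟨a, b⟩ h
      simp only [Finset.mem_coe, Finset.mem_filter, Finset.mem_product, Finset.mem_range] at h ⊢
      obtain ⟨⟨-, -⟩, hlt, ha, hb⟩ := h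
      have hl : a ≤ n := testBit_le ha
      rw [testBit_two_mul_succ, testBit_two_mul_succ]
      exact ⟨⟨⟨by omega, by omega⟩, by omega, ha, hb⟩, by omega⟩
    · rintro ⟨a, b⟩ h
      simp only [Finset.mem_coe, Finset.mem_filter] at h
      obtain ⟨⟨-, hlt, -, -⟩, hne⟩ := h
      simp only [Prod.mk.injEq]
      omega
    · rintro ⟨a, b⟩ _; simp
  · -- p.2 = 0 part ↔ ones n
    apply Finset.card_nbij' (fun p => p.1 - 1) (fun a => (a + 1, 0))
    · rintro ⟨a, b⟩ h
      simp only [Finset.mem_coe, Finset.mem_filter, Finset.mem_product, Finset.mem_range] at h ⊢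
      obtain ⟨⟨-, hlt, ha, -⟩, rfl⟩ := h
      obtain ⟨l, rfl⟩ : ∃ l, a = l + 1 := ⟨a - 1, by omega⟩
      rw [testBit_two_mul_succ] at ha
      simp only [Nat.add_sub_cancel]
      exact ⟨Nat.lt_succ_of_le (testBit_le ha), ha⟩
    · rintro a h
      simp only [Finset.mem_coe, Finset.mem_filter, Finset.mem_product, Finset.mem_range] at h ⊢
      obtain ⟨-, ha⟩ := h
      have hl : a < n := testBit_lt ha
      rw [testBit_two_mul_succ]
      exact ⟨⟨⟨by omega, by omega⟩, by omega, ha, testBit_two_mul_zero n⟩, trivial⟩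
    · rintro ⟨a, b⟩ h
      simp only [Finset.mem_coe, Finset.mem_filter, Finset.mem_product, Finset.mem_range] at h
      obtain ⟨⟨hp, hlt, ha, hb⟩, hb0⟩ := h
      simp only [Prod.mk.injEq]
      omega
    · intro a _; simp

lemma inv2_two_mul_add_one (n : ℕ) : inv2 (2 * n + 1) = inv2 n := by
  unfold inv2
  apply Finset.card_nbij' (fun p => (p.1 - 1, p.2 - 1)) (fun p => (p.1 + 1, p.2 + 1))
  · rintro ⟨a, b⟩ h
    simp only [Finset.mem_coe, Finset.mem_filter, Finset.mem_product, Finset.mem_range] at h ⊢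
    obtain ⟨⟨-, -⟩, hlt, ha, hb⟩ := h
    have hbne : b ≠ 0 := by
      rintro rfl
      rw [Nat.testBit_zero] at hb
      simp [Nat.add_mul_mod_self_left] at hb
    obtain ⟨k, rfl⟩ := Nat.exists_eq_succ_of_ne_zero hbne
    obtain ⟨l, rfl⟩ : ∃ l, a = l + 1 := ⟨a - 1, by omega⟩
    rw [testBit_two_mul_add_one_succ] at ha hb
    simp only [Nat.add_sub_cancel]
    have hl : l ≤ n := testBit_le ha
    exact ⟨⟨by omega, by omega⟩, by omega, ha, hb⟩
  · rintro ⟨a, b⟩ h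
    simp only [Finset.mem_coe, Finset.mem_filter, Finset.mem_product, Finset.mem_range] at h ⊢
    obtain ⟨⟨-, -⟩, hlt, ha, hb⟩ := h
    have hl : a ≤ n := testBit_le ha
    rw [testBit_two_mul_add_one_succ, testBit_two_mul_add_one_succ]
    exact ⟨⟨by omega, by omega⟩, by omega, ha, hb⟩
  · rintro ⟨a, b⟩ h
    simp only [Finset.mem_coe, Finset.mem_filter, Finset.mem_product, Finset.mem_range] at h
    obtain ⟨⟨-, -⟩, hlt, ha, hb⟩ := h
    have hbne : b ≠ 0 := by
      rintro rfl
      rw [Nat.testBit_zero] at hb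
      simp [Nat.add_mul_mod_self_left] at hb
    simp only [Prod.mk.injEq]
    omega
  · rintro ⟨a, b⟩ _; simp

theorem iSeq_two_mul_recurrences (n : ℕ) :
    iSeq (2 * n) = iSeq n * tm n ∧ iSeq (2 * n + 1) = iSeq n := by
  constructor
  · unfold iSeq tm
    rw [inv2_two_mul, pow_add, ones_eq_digitsSum]
  · unfold iSeq
    rw [inv2_two_mul_add_one]
end

section
/- For every integer k ≥ 1: (1) S(n + 2^{2k}) = -S(n) + 3·2^k for all n with 2^{2k} ≤ n ≤ 2^{2k+1} - 1; (2) S(n + 3·2^{2k}) = S(n) + 2^k for all n with 0 ≤ n ≤ 2^{2k} - 1; (3) S(n + 2^{2k+1}) = -S(n) + 2^{k+2} for all n with 2^{2k+1} ≤ n ≤ 2^{2k+2} - 1; (4) S(n + 3·2^{2k+1}) = S(n) + 2^{k+1} for all n with 0 ≤ n ≤ 2^{2k+1} - 1. -/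
/-- The summatory function `S N = ∑_{0 ≤ n ≤ N} iSeq n`. -/
def S (N : ℕ) : ℤ := ∑ n ∈ Finset.range (N + 1), iSeq n

/-- Inversion set over a window of size `M`. -/
def invSet (M n : ℕ) : Finset (ℕ × ℕ) :=
  ((Finset.range M ×ˢ Finset.range M).filter
    (fun p => p.2 < p.1 ∧ n.testBit p.1 = true ∧ n.testBit p.2 = false))

lemma testBit_lt_of_true {n a : ℕ} (h : n.testBit a = true) : a < n + 1 := by
  by_contra h'
  have : n < 2 ^ a := lt_of_lt_of_le (Nat.lt_succ_self n) ((Nat.le_of_not_lt h').trans (Nat.le_of_lt (Nat.lt_two_pow_self (n := a))))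
  simp [Nat.testBit_eq_false_of_lt this] at h

lemma inv2_eq_invSet (n M : ℕ) (h : n + 1 ≤ M) : inv2 n = (invSet M n).card := by
  have : invSet (n+1) n = invSet M n := by
    ext ⟨a, b⟩
    simp only [invSet, Finset.mem_filter, Finset.mem_product, Finset.mem_range]
    constructor
    · rintro ⟨⟨ha, hb⟩, hba, h1, h2⟩
      exact ⟨⟨lt_of_lt_of_le ha h, lt_of_lt_of_le hb h⟩, hba, h1, h2⟩
    · rintro ⟨⟨ha, hb⟩, hba, h1, h2⟩
      have ha' : a < n + 1 := testBit_lt_of_true h1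
      exact ⟨⟨ha', lt_trans hba ha'⟩, hba, h1, h2⟩
  rw [inv2, ← this]; rfl

def onesB (j n : ℕ) : ℕ := ((Finset.range j).filter (fun b => n.testBit b = true)).card
def zerosB (j n : ℕ) : ℕ := ((Finset.range j).filter (fun b => n.testBit b = false)).card

lemma onesB_add_zerosB (j n : ℕ) : onesB j n + zerosB j n = j := by
  have : zerosB j n = ((Finset.range j).filter (fun b => ¬ (n.testBit b = true))).card := by
    unfold zerosB; congr 1; apply Finset.filter_congr; intro b _; simp
  rw [onesB, this, Finset.card_filter_add_card_filter_not, Finset.card_range]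

lemma testBit_lt_pow {n j a : ℕ} (hn : n < 2 ^ j) (h : n.testBit a = true) : a < j := by
  by_contra h'
  have : n < 2 ^ a := lt_of_lt_of_le hn (Nat.pow_le_pow_right (by norm_num) (Nat.le_of_not_lt h'))
  simp [Nat.testBit_eq_false_of_lt this] at h

lemma inv2_pow_add {j n : ℕ} (hn : n < 2 ^ j) :
    inv2 (2 ^ j + n) = inv2 n + zerosB j n := by
  set N := 2 ^ j + n with hN
  have hNlt : N < 2 ^ (j + 1) := by
    rw [pow_succ]; omega
  have hM : n + 1 ≤ N + 1 := by omega
  have hbit_lt : ∀ a, a < j → N.testBit a = n.testBit a := fun a ha =>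
    Nat.testBit_two_pow_add_gt ha n
  have hbitj : N.testBit j = true := by
    rw [hN, Nat.testBit_two_pow_add_eq, Nat.testBit_eq_false_of_lt hn]; rfl
  rw [inv2_eq_invSet N (N + 1) (le_refl _), inv2_eq_invSet n (N + 1) hM]
  rw [← Finset.card_filter_add_card_filter_not (s := invSet (N+1) N)
    (p := fun p => p.1 < j)]
  congr 1
  · -- pairs with high index < j are exactly inversions of n
    congr 1
    ext ⟨a, b⟩
    simp only [invSet, Finset.mem_filter, Finset.mem_product, Finset.mem_range]
    constructor
    · rintro ⟨⟨⟨ha, hb⟩, hba, h1, h2⟩, haj⟩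
      rw [hbit_lt a haj, hbit_lt b (lt_trans hba haj)] at *
      exact ⟨⟨ha, hb⟩, hba, h1, h2⟩
    · rintro ⟨⟨ha, hb⟩, hba, h1, h2⟩
      have haj : a < j := testBit_lt_pow hn h1
      rw [← hbit_lt a haj, ← hbit_lt b (lt_trans hba haj)] at *
      exact ⟨⟨⟨ha, hb⟩, hba, h1, h2⟩, haj⟩
  · -- pairs with high index ≥ j : high index must be j, count zeros of n below j
    rw [zerosB]
    apply Finset.card_bij (fun p _ => p.2)
    · rintro ⟨a, b⟩ hp
      simp only [invSet, Finset.mem_filter, Finset.mem_product, Finset.mem_range] at hp ⊢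
      obtain ⟨⟨⟨ha, hb⟩, hba, h1, h2⟩, haj⟩ := hp
      have haeq : a = j := by
        by_contra hne
        have : j < a := lt_of_le_of_ne (Nat.le_of_not_lt haj) (Ne.symm hne)
        have : N < 2 ^ a := lt_of_lt_of_le hNlt (Nat.pow_le_pow_right (by norm_num) this)
        simp [Nat.testBit_eq_false_of_lt this] at h1
      subst haeq
      exact ⟨hba, by rw [← hbit_lt b hba]; exact h2⟩
    · rintro ⟨a, b⟩ hp ⟨a', b'⟩ hp' hbb
      simp only [invSet, Finset.mem_filter, Finset.mem_product, Finset.mem_range] at hp hp'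
      obtain ⟨⟨⟨ha, hb⟩, hba, h1, h2⟩, haj⟩ := hp
      obtain ⟨⟨⟨ha', hb'⟩, hba', h1', h2'⟩, haj'⟩ := hp'
      have haeq : a = j := by
        by_contra hne
        have : j < a := lt_of_le_of_ne (Nat.le_of_not_lt haj) (Ne.symm hne)
        have : N < 2 ^ a := lt_of_lt_of_le hNlt (Nat.pow_le_pow_right (by norm_num) this)
        simp [Nat.testBit_eq_false_of_lt this] at h1
      have haeq' : a' = j := by
        by_contra hne
        have : j < a' := lt_of_le_of_ne (Nat.le_of_not_lt haj') (Ne.symm hne)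
        have : N < 2 ^ a' := lt_of_lt_of_le hNlt (Nat.pow_le_pow_right (by norm_num) this)
        simp [Nat.testBit_eq_false_of_lt this] at h1'
      simp_all
    · intro b hb
      simp only [Finset.mem_filter, Finset.mem_range] at hb
      obtain ⟨hbj, hb0⟩ := hb
      have hjN : j < N + 1 := by
        have := Nat.lt_two_pow_self (n := j); omega
      refine ⟨⟨j, b⟩, ?_, rfl⟩
      simp only [invSet, Finset.mem_filter, Finset.mem_product, Finset.mem_range]
      exact ⟨⟨⟨hjN, lt_trans hbj hjN⟩, hbj, hbitj, by rw [hbit_lt b hbj]; exact hb0⟩,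
        lt_irrefl j⟩

lemma iSeq_pow_add {j n : ℕ} (hn : n < 2 ^ j) :
    iSeq (2 ^ j + n) = (-1) ^ j * ((-1) ^ onesB j n * iSeq n) := by
  have hz := onesB_add_zerosB j n
  rw [iSeq, iSeq, inv2_pow_add hn, pow_add]
  have h1 : ((-1 : ℤ)) ^ onesB j n * (-1) ^ zerosB j n = (-1) ^ j := by
    rw [← pow_add, hz]
  have h2 : ((-1 : ℤ)) ^ onesB j n * (-1) ^ onesB j n = 1 := by
    rw [← pow_add]; exact Even.neg_one_pow (Even.add_self _)
  linear_combination ((-1 : ℤ) ^ onesB j n * (-1) ^ inv2 n) * h1 -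
    ((-1 : ℤ) ^ zerosB j n * (-1) ^ inv2 n) * h2

lemma onesB_stable {j j' n : ℕ} (h : j ≤ j') (hn : n < 2 ^ j) : onesB j' n = onesB j n := by
  unfold onesB; congr 1
  ext b
  simp only [Finset.mem_filter, Finset.mem_range]
  constructor
  · rintro ⟨_, hb⟩; exact ⟨testBit_lt_pow hn hb, hb⟩
  · rintro ⟨hbj, hb⟩; exact ⟨lt_of_lt_of_le hbj h, hb⟩

lemma onesB_succ_add {j n : ℕ} (hn : n < 2 ^ j) :
    onesB (j + 1) (2 ^ j + n) = onesB j n + 1 := by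
  have hbitj : (2 ^ j + n).testBit j = true := by
    rw [Nat.testBit_two_pow_add_eq, Nat.testBit_eq_false_of_lt hn]; rfl
  unfold onesB
  rw [Finset.range_add_one, Finset.filter_insert, if_pos hbitj, Finset.card_insert_of_notMem
    (by simp)]
  congr 2
  apply Finset.filter_congr
  intro b hb
  simp only [Finset.mem_range] at hb
  rw [Nat.testBit_two_pow_add_gt hb]

def TT (j m : ℕ) : ℤ := ∑ r ∈ Finset.range m, (-1) ^ onesB j r * iSeq r
def AA (j : ℕ) : ℤ := ∑ r ∈ Finset.range (2 ^ j), iSeq r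
def BB (j : ℕ) : ℤ := TT j (2 ^ j)

lemma sumA (j m : ℕ) (hm : m ≤ 2 ^ j) :
    ∑ r ∈ Finset.range (2 ^ j + m), iSeq r = AA j + (-1) ^ j * TT j m := by
  rw [Finset.sum_range_add, AA, TT, Finset.mul_sum]
  congr 1
  apply Finset.sum_congr rfl
  intro i hi
  simp only [Finset.mem_range] at hi
  rw [iSeq_pow_add (lt_of_lt_of_le hi hm)]

lemma sumT (j m : ℕ) (hm : m ≤ 2 ^ j) :
    TT (j + 1) (2 ^ j + m) = BB j + (-1) ^ (j + 1) * ∑ r ∈ Finset.range m, iSeq r := by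
  rw [TT, Finset.sum_range_add, Finset.mul_sum, BB, TT]
  congr 1
  · apply Finset.sum_congr rfl
    intro r hr
    simp only [Finset.mem_range] at hr
    rw [onesB_stable (Nat.le_succ j) hr]
  · apply Finset.sum_congr rfl
    intro i hi
    simp only [Finset.mem_range] at hi
    have hi' : i < 2 ^ j := lt_of_lt_of_le hi hm
    rw [onesB_succ_add hi', iSeq_pow_add hi']
    have h2 : ((-1 : ℤ)) ^ onesB j i * (-1) ^ onesB j i = 1 := by
      rw [← pow_add]; exact Even.neg_one_pow (Even.add_self _)
    rw [pow_succ, pow_succ]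
    linear_combination (-(1 : ℤ)) * (-1) ^ j * iSeq i * h2

lemma AA_succ (j : ℕ) : AA (j + 1) = AA j + (-1) ^ j * BB j := by
  have h : (2 : ℕ) ^ (j + 1) = 2 ^ j + 2 ^ j := by rw [pow_succ]; ring
  rw [AA, h, sumA j (2 ^ j) (le_refl _)]; rfl

lemma BB_succ (j : ℕ) : BB (j + 1) = BB j + (-1) ^ (j + 1) * AA j := by
  have h : (2 : ℕ) ^ (j + 1) = 2 ^ j + 2 ^ j := by rw [pow_succ]; ring
  rw [BB, h, sumT j (2 ^ j) (le_refl _)]; rfl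

lemma iSeq_zero : iSeq 0 = 1 := by decide

lemma AB_values (k : ℕ) :
    AA (2 * k) = 2 ^ k ∧ AA (2 * k + 1) = 2 ^ (k + 1) ∧
      BB (2 * k) = 2 ^ k ∧ BB (2 * k + 1) = 0 := by
  induction k with
  | zero =>
    have hA0 : AA 0 = 1 := by
      rw [AA]; norm_num [iSeq_zero]
    have hB0 : BB 0 = 1 := by
      rw [BB, TT]; norm_num [iSeq_zero, onesB]
    refine ⟨by simpa using hA0, ?_, by simpa using hB0, ?_⟩
    · rw [show 2 * 0 + 1 = 0 + 1 by rfl, AA_succ, hA0, hB0]; norm_num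
    · rw [show 2 * 0 + 1 = 0 + 1 by rfl, BB_succ, hA0, hB0]; norm_num
  | succ k ih =>
    obtain ⟨hA, hA', hB, hB'⟩ := ih
    have e1 : 2 * (k + 1) = (2 * k + 1) + 1 := by ring
    have hA2 : AA (2 * (k + 1)) = 2 ^ (k + 1) := by
      rw [e1, AA_succ, hA', hB']
      have : ((-1 : ℤ)) ^ (2 * k + 1) = -1 := by
        rw [pow_succ, pow_mul]; norm_num
      rw [this]; ring
    have hB2 : BB (2 * (k + 1)) = 2 ^ (k + 1) := by
      rw [e1, BB_succ, hB', hA']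
      have : ((-1 : ℤ)) ^ (2 * k + 1 + 1) = 1 := by
        rw [pow_succ, pow_succ, pow_mul]; norm_num
      rw [this]; ring
    refine ⟨hA2, ?_, hB2, ?_⟩
    · rw [AA_succ, hA2, hB2]
      have : ((-1 : ℤ)) ^ (2 * (k + 1)) = 1 := by rw [pow_mul]; norm_num
      rw [this]; ring
    · rw [BB_succ, hB2, hA2]
      have : ((-1 : ℤ)) ^ (2 * (k + 1) + 1) = -1 := by
        rw [pow_succ, pow_mul]; norm_num
      rw [this]; ring

lemma claim13 (j n : ℕ) (h1 : 2 ^ j ≤ n) (h2 : n < 2 ^ (j + 1)) :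
    S (n + 2 ^ j) + S n = AA j + AA (j + 1) := by
  obtain ⟨m, rfl⟩ := Nat.exists_eq_add_of_le h1
  have hpp : (2 : ℕ) ^ (j + 1) = 2 ^ j + 2 ^ j := by rw [pow_succ]; ring
  have hm1 : m + 1 ≤ 2 ^ j := by omega
  have hm1' : m + 1 ≤ 2 ^ (j + 1) := by omega
  have hSn : S (2 ^ j + m) = AA j + (-1) ^ j * TT j (m + 1) := by
    rw [S, Nat.add_assoc]; exact sumA j (m + 1) hm1
  have hSn2 : S (2 ^ j + m + 2 ^ j) = AA (j + 1) + (-1) ^ (j + 1) * TT (j + 1) (m + 1) := by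
    rw [S, show 2 ^ j + m + 2 ^ j + 1 = 2 ^ (j + 1) + (m + 1) by omega]
    exact sumA (j + 1) (m + 1) hm1'
  have hT : TT (j + 1) (m + 1) = TT j (m + 1) := by
    rw [TT, TT]
    apply Finset.sum_congr rfl
    intro r hr
    simp only [Finset.mem_range] at hr
    rw [onesB_stable (Nat.le_succ j) (lt_of_lt_of_le hr hm1)]
  rw [hSn, hSn2, hT, pow_succ]
  ring

lemma claim24 (j n : ℕ) (h : n < 2 ^ j) :
    S (n + 3 * 2 ^ j) = S n + AA (j + 1) + (-1) ^ (j + 1) * BB j := by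
  have hpp : (2 : ℕ) ^ (j + 1) = 2 ^ j + 2 ^ j := by rw [pow_succ]; ring
  have hm : 2 ^ j + (n + 1) ≤ 2 ^ (j + 1) := by omega
  have hS : S (n + 3 * 2 ^ j) =
      AA (j + 1) + (-1) ^ (j + 1) * TT (j + 1) (2 ^ j + (n + 1)) := by
    rw [S, show n + 3 * 2 ^ j + 1 = 2 ^ (j + 1) + (2 ^ j + (n + 1)) by omega]
    exact sumA (j + 1) (2 ^ j + (n + 1)) hm
  have hT : TT (j + 1) (2 ^ j + (n + 1)) = BB j + (-1) ^ (j + 1) * S n := by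
    rw [sumT j (n + 1) h, S]
  have hsq : ((-1 : ℤ)) ^ (j + 1) * (-1) ^ (j + 1) = 1 := by
    rw [← pow_add]; exact Even.neg_one_pow (Even.add_self _)
  rw [hS, hT]
  linear_combination S n * hsq

theorem summatory_reflection_identities (k : ℕ) (hk : 1 ≤ k) :
    (∀ n : ℕ, 2 ^ (2 * k) ≤ n → n ≤ 2 ^ (2 * k + 1) - 1 →
        S (n + 2 ^ (2 * k)) = -S n + 3 * 2 ^ k) ∧
      (∀ n : ℕ, n ≤ 2 ^ (2 * k) - 1 →
        S (n + 3 * 2 ^ (2 * k)) = S n + 2 ^ k) ∧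
      (∀ n : ℕ, 2 ^ (2 * k + 1) ≤ n → n ≤ 2 ^ (2 * k + 2) - 1 →
        S (n + 2 ^ (2 * k + 1)) = -S n + 2 ^ (k + 2)) ∧
      (∀ n : ℕ, n ≤ 2 ^ (2 * k + 1) - 1 →
        S (n + 3 * 2 ^ (2 * k + 1)) = S n + 2 ^ (k + 1)) := by
  obtain ⟨hA, hA', hB, hB'⟩ := AB_values k
  obtain ⟨hA2, hA2', hB2, hB2'⟩ := AB_values (k + 1)
  have hA'' : AA (2 * k + 2) = 2 ^ (k + 1) := by
    rw [show 2 * k + 2 = 2 * (k + 1) by ring]; exact hA2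
  have hOdd : ((-1 : ℤ)) ^ (2 * k + 1) = -1 := by
    rw [pow_succ, pow_mul]; norm_num
  have hEven2 : ((-1 : ℤ)) ^ (2 * k + 1 + 1) = 1 := by
    rw [pow_succ, hOdd]; norm_num
  refine ⟨?_, ?_, ?_, ?_⟩
  · intro n h1 h2
    have h2' : n < 2 ^ (2 * k + 1) := by
      have : (1 : ℕ) ≤ 2 ^ (2 * k + 1) := Nat.one_le_two_pow
      omega
    have := claim13 (2 * k) n h1 h2'
    rw [hA, hA'] at this
    have hp : (2 : ℤ) ^ (k + 1) = 2 * 2 ^ k := by rw [pow_succ]; ring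
    linarith [this]
  · intro n h2
    have hn : n < 2 ^ (2 * k) := by
      have : (1 : ℕ) ≤ 2 ^ (2 * k) := Nat.one_le_two_pow
      omega
    rw [claim24 (2 * k) n hn, hA', hB, hOdd]
    have hp : (2 : ℤ) ^ (k + 1) = 2 * 2 ^ k := by rw [pow_succ]; ring
    linarith
  · intro n h1 h2
    have h2' : n < 2 ^ (2 * k + 1 + 1) := by
      have h0 : (1 : ℕ) ≤ 2 ^ (2 * k + 2) := Nat.one_le_two_pow
      rw [show 2 * k + 1 + 1 = 2 * k + 2 by omega]
      omega
    have := claim13 (2 * k + 1) n h1 h2'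
    rw [hA', hA''] at this
    have hp : (2 : ℤ) ^ (k + 2) = 2 * 2 ^ (k + 1) := by rw [pow_succ]; ring
    linarith [this]
  · intro n h2
    have hn : n < 2 ^ (2 * k + 1) := by
      have : (1 : ℕ) ≤ 2 ^ (2 * k + 1) := Nat.one_le_two_pow
      omega
    rw [claim24 (2 * k + 1) n hn, hB', hEven2]
    rw [show 2 * k + 1 + 1 = 2 * (k + 1) by ring, hA2]
    ring
end

section
/- Let k ≥ 1. If n = 2^{2k} - 1 - ∑_{r=0}^{k-2} ε_r·(3·2^{2r+1}) - β for some choice of ε_r ∈ {0,1} (for 0 ≤ r ≤ k-2) and β ∈ {0,2}, then i_n = +1. -/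
/-- An integer `n` is of the special form for `k ≥ 1` if
`n = 2^(2k) - 1 - ∑_{r=0}^{k-2} ε_r (3 ⬝ 2^(2r+1)) - β` for some choice of
`ε_r ∈ {0,1}` and `β ∈ {0,2}`. -/
def IsSpecialForm (k : ℕ) (n : ℤ) : Prop :=
  ∃ ε : ℕ → ℤ, (∀ r, ε r = 0 ∨ ε r = 1) ∧
    ∃ β : ℤ, (β = 0 ∨ β = 2) ∧
      n = 2 ^ (2 * k) - 1 - (∑ r ∈ Finset.range (k - 1), ε r * (3 * 2 ^ (2 * r + 1))) - β

namespace Inv2Aux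

/-- number of set bits among positions `< N` -/
def ones (N n : ℕ) : ℕ := ∑ b ∈ Finset.range N, if n.testBit b then 1 else 0

/-- inversions among positions `< N` -/
def J (N n : ℕ) : ℕ :=
  ∑ a ∈ Finset.range N, ∑ b ∈ Finset.range N,
    if b < a ∧ n.testBit a = true ∧ n.testBit b = false then 1 else 0

lemma inv2_eq_J (n : ℕ) : inv2 n = J (n + 1) n := by
  unfold inv2 J
  rw [Finset.card_filter, Finset.sum_product]

lemma lt_two_pow_of_le {n N : ℕ} (h : n + 1 ≤ N) : n < 2 ^ N :=
  lt_of_lt_of_le (Nat.lt_two_pow_self (n := n)) (Nat.pow_le_pow_right (by norm_num) (by omega))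

lemma ones_succ {n N : ℕ} (h : n < 2 ^ N) : ones (N + 1) n = ones N n := by
  unfold ones
  rw [Finset.sum_range_succ, Nat.testBit_lt_two_pow h]
  simp

/-- the count of set bits, as a function of `n` alone -/
def S (n : ℕ) : ℕ := ones (n + 1) n

lemma ones_eq_S {n N : ℕ} (h : n + 1 ≤ N) : ones N n = S n := by
  induction N, h using Nat.le_induction with
  | base => rfl
  | succ N hN ih => rw [ones_succ (lt_two_pow_of_le hN), ih]

lemma testBit_two_mul_zero (n : ℕ) : (2 * n).testBit 0 = false := by
  rw [Nat.testBit_zero]; simp [Nat.mul_mod_right]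

lemma testBit_two_mul_add_one_zero (n : ℕ) : (2 * n + 1).testBit 0 = true := by
  rw [Nat.testBit_zero]
  simp only [decide_eq_true_eq]
  omega

lemma testBit_two_mul_succ (n i : ℕ) : (2 * n).testBit (i + 1) = n.testBit i := by
  rw [Nat.testBit_succ]
  congr 1
  omega

lemma testBit_two_mul_add_one_succ (n i : ℕ) :
    (2 * n + 1).testBit (i + 1) = n.testBit i := by
  rw [Nat.testBit_succ]
  congr 1
  omega

lemma ones_shift_even (N n : ℕ) : ones (N + 1) (2 * n) = ones N n := by
  unfold ones
  rw [Finset.sum_range_succ']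
  simp [testBit_two_mul_zero, testBit_two_mul_succ]

lemma ones_shift_odd (N n : ℕ) : ones (N + 1) (2 * n + 1) = ones N n + 1 := by
  unfold ones
  rw [Finset.sum_range_succ']
  simp only [testBit_two_mul_add_one_zero, testBit_two_mul_add_one_succ, if_true]

lemma S_even (n : ℕ) : S (2 * n) = S n := by
  have h1 : ones (2 * n + 1 + 1) (2 * n) = S (2 * n) := ones_eq_S (by omega)
  rw [← h1, ones_shift_even, ones_eq_S (by omega)]

lemma S_odd (n : ℕ) : S (2 * n + 1) = S n + 1 := by
  have h1 : ones (2 * n + 1 + 1) (2 * n + 1) = S (2 * n + 1) := ones_eq_S (by omega)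
  rw [← h1, ones_shift_odd, ones_eq_S (by omega)]

lemma J_succ {n N : ℕ} (h : n < 2 ^ N) : J (N + 1) n = J N n := by
  unfold J
  rw [Finset.sum_range_succ]
  have h2 : ∀ b ∈ Finset.range (N + 1),
      (if b < N ∧ n.testBit N = true ∧ n.testBit b = false then 1 else 0) = 0 := by
    intro b _
    rw [Nat.testBit_lt_two_pow h]
    simp
  rw [Finset.sum_congr rfl h2, Finset.sum_const, smul_zero, add_zero]
  apply Finset.sum_congr rfl
  intro a ha
  rw [Finset.mem_range] at ha
  rw [Finset.sum_range_succ]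
  have : ¬(N < a ∧ n.testBit a = true ∧ n.testBit N = false) := by
    rintro ⟨h1, -, -⟩; omega
  rw [if_neg this, add_zero]

lemma J_eq_inv2 {n N : ℕ} (h : n + 1 ≤ N) : J N n = inv2 n := by
  induction N, h using Nat.le_induction with
  | base => exact (inv2_eq_J n).symm
  | succ N hN ih => rw [J_succ (lt_two_pow_of_le hN), ih]

lemma J_shift_odd (N n : ℕ) : J (N + 1) (2 * n + 1) = J N n := by
  unfold J
  rw [Finset.sum_range_succ']
  have h0 : (∑ b ∈ Finset.range (N + 1),
      if b < 0 ∧ (2 * n + 1).testBit 0 = true ∧ (2 * n + 1).testBit b = false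
      then 1 else 0) = 0 := by
    apply Finset.sum_eq_zero
    intro b _
    simp
  rw [h0, add_zero]
  apply Finset.sum_congr rfl
  intro a _
  rw [Finset.sum_range_succ']
  simp only [testBit_two_mul_add_one_zero, testBit_two_mul_add_one_succ,
    Nat.succ_lt_succ_iff, Nat.not_lt_zero]
  simp

lemma J_shift_even (N n : ℕ) : J (N + 1) (2 * n) = J N n + ones N n := by
  unfold J ones
  rw [Finset.sum_range_succ']
  have h0 : (∑ b ∈ Finset.range (N + 1),
      if b < 0 ∧ (2 * n).testBit 0 = true ∧ (2 * n).testBit b = false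
      then 1 else 0) = 0 := by
    apply Finset.sum_eq_zero
    intro b _
    simp
  rw [h0, add_zero]
  rw [← Finset.sum_add_distrib]
  apply Finset.sum_congr rfl
  intro a _
  rw [Finset.sum_range_succ']
  simp only [testBit_two_mul_zero, testBit_two_mul_succ, Nat.succ_lt_succ_iff]
  simp

lemma inv2_odd (n : ℕ) : inv2 (2 * n + 1) = inv2 n := by
  rw [← J_eq_inv2 (le_refl (2 * n + 1 + 1)), J_shift_odd, J_eq_inv2 (by omega)]

lemma inv2_even (n : ℕ) : inv2 (2 * n) = inv2 n + S n := by
  have h1 : J (2 * n + 1 + 1) (2 * n) = inv2 (2 * n) := J_eq_inv2 (by omega)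
  rw [← h1, J_shift_even, J_eq_inv2 (by omega), ones_eq_S (by omega)]

/-- the β = 0 special-form number for `k = j + 1`. -/
def am : ℕ → (ℕ → Bool) → ℕ
  | 0, _ => 3
  | (j + 1), ε =>
      if ε 0 then 4 * am j (fun i => ε (i + 1)) - 3 else 4 * am j (fun i => ε (i + 1)) + 3

lemma am_ge (j : ℕ) (ε : ℕ → Bool) : 3 ≤ am j ε := by
  induction j generalizing ε with
  | zero => simp [am]
  | succ j ih =>
    simp only [am]
    split <;> [skip; omega]
    have := ih (fun i => ε (i + 1))
    omega

lemma am_odd (j : ℕ) (ε : ℕ → Bool) : am j ε % 2 = 1 := by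
  induction j generalizing ε with
  | zero => simp [am]
  | succ j ih =>
    simp only [am]
    have h1 := ih (fun i => ε (i + 1))
    have h2 := am_ge j (fun i => ε (i + 1))
    split <;> omega

lemma am_val (j : ℕ) (ε : ℕ → Bool) :
    (am j ε : ℤ) = 2 ^ (2 * (j + 1)) - 1 -
      ∑ r ∈ Finset.range j, (if ε r then (1 : ℤ) else 0) * (3 * 2 ^ (2 * r + 1)) := by
  induction j generalizing ε with
  | zero => simp [am]
  | succ j ih =>
    have hge := am_ge j (fun i => ε (i + 1))
    have hih := ih (fun i => ε (i + 1))
    have hsum : ∑ r ∈ Finset.range (j + 1), (if ε r then (1 : ℤ) else 0) * (3 * 2 ^ (2 * r + 1))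
        = 4 * (∑ r ∈ Finset.range j, (if ε (r + 1) then (1 : ℤ) else 0) * (3 * 2 ^ (2 * r + 1)))
          + (if ε 0 then (1 : ℤ) else 0) * 6 := by
      have hterm : ∀ r ∈ Finset.range j,
          (if ε (r + 1) then (1 : ℤ) else 0) * (3 * 2 ^ (2 * (r + 1) + 1))
          = 4 * ((if ε (r + 1) then (1 : ℤ) else 0) * (3 * 2 ^ (2 * r + 1))) := by
        intro r _
        rw [show 2 * (r + 1) + 1 = (2 * r + 1) + 2 by ring, pow_add]
        ring
      rw [Finset.sum_range_succ', Finset.sum_congr rfl hterm, ← Finset.mul_sum]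
      norm_num
    simp only [am]
    split
    · next hT =>
      have hcast : ((4 * am j (fun i => ε (i + 1)) - 3 : ℕ) : ℤ)
          = 4 * (am j (fun i => ε (i + 1)) : ℤ) - 3 := by
        push_cast [Nat.cast_sub (by omega : 3 ≤ 4 * am j (fun i => ε (i + 1)))]
        ring
      rw [hcast, hsum, hih, if_pos hT]
      have : 2 * (j + 1 + 1) = 2 * (j + 1) + 2 := by ring
      rw [this, pow_add]
      ring
    · next hT =>
      push_cast
      rw [hsum, hih, if_neg hT]
      have : 2 * (j + 1 + 1) = 2 * (j + 1) + 2 := by ring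
      rw [this, pow_add]
      ring

lemma base_facts : inv2 0 = 0 ∧ inv2 1 = 0 ∧ inv2 3 = 0 ∧ S 3 = 2 := by
  refine ⟨?_, ?_, ?_, ?_⟩ <;> decide

/-- Main parity induction. -/
lemma main (j : ℕ) (ε : ℕ → Bool) :
    inv2 (am j ε) % 2 = 0 ∧ S (am j ε) % 2 = 0 ∧
    inv2 ((am j ε - 3) / 2) % 2 = 0 ∧ inv2 (am j ε - 2) % 2 = 0 := by
  induction j generalizing ε with
  | zero =>
    have h := base_facts
    simp only [am]
    norm_num [h.1, h.2.1, h.2.2.1, h.2.2.2]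
  | succ j ih =>
    obtain ⟨ha, hb, hc, hd⟩ := ih (fun i => ε (i + 1))
    set m := am j (fun i => ε (i + 1)) with hm
    have hge : 3 ≤ m := am_ge j _
    have hodd : m % 2 = 1 := am_odd j _
    obtain ⟨q, hq⟩ : ∃ q, m = 2 * q + 1 := ⟨m / 2, by omega⟩
    have hq1 : 1 ≤ q := by omega
    simp only [am, ← hm]
    split
    · -- ε 0 = true : am = 4m - 3 = 8q + 1
      have h8 : 4 * m - 3 = 2 * (2 * (2 * q)) + 1 := by omega
      have hSq : S (2 * q) = S q := S_even q
      have hqm : inv2 q = inv2 m := by rw [hq, inv2_odd]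
      -- (a)
      have ha' : inv2 (4 * m - 3) % 2 = 0 := by
        rw [h8, inv2_odd, inv2_even, inv2_even]
        omega
      -- (b)
      have hSm : S m = S q + 1 := by rw [hq, S_odd]
      have hb' : S (4 * m - 3) % 2 = 0 := by
        have h' : S (4 * m - 3) = S q + 1 := by
          rw [h8, S_odd, S_even, S_even]
        omega
      -- (c)
      have hc' : inv2 ((4 * m - 3 - 3) / 2) % 2 = 0 := by
        have h1 : (4 * m - 3 - 3) / 2 = 2 * (2 * (q - 1) + 1) + 1 := by omega
        have h2 : (m - 3) / 2 = q - 1 := by omega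
        rw [h1, inv2_odd, inv2_odd, ← h2]
        exact hc
      -- (d)
      have hd' : inv2 (4 * m - 3 - 2) % 2 = 0 := by
        have h1 : 4 * m - 3 - 2 = 2 * (2 * (2 * (q - 1) + 1) + 1) + 1 := by omega
        have h2 : (m - 3) / 2 = q - 1 := by omega
        rw [h1, inv2_odd, inv2_odd, inv2_odd, ← h2]
        exact hc
      exact ⟨ha', hb', hc', hd'⟩
    · -- ε 0 = false : am = 4m + 3
      have ha' : inv2 (4 * m + 3) % 2 = 0 := by
        have h1 : 4 * m + 3 = 2 * (2 * m + 1) + 1 := by ring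
        rw [h1, inv2_odd, inv2_odd]
        exact ha
      have hb' : S (4 * m + 3) % 2 = 0 := by
        have h1 : 4 * m + 3 = 2 * (2 * m + 1) + 1 := by ring
        rw [h1, S_odd, S_odd]
        omega
      have hc' : inv2 ((4 * m + 3 - 3) / 2) % 2 = 0 := by
        have h1 : (4 * m + 3 - 3) / 2 = 2 * m := by omega
        rw [h1, inv2_even]
        omega
      have hd' : inv2 (4 * m + 3 - 2) % 2 = 0 := by
        have h1 : 4 * m + 3 - 2 = 2 * (2 * m) + 1 := by omega
        rw [h1, inv2_odd, inv2_even]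
        omega
      exact ⟨ha', hb', hc', hd'⟩

end Inv2Aux

theorem iSeq_eq_one_of_specialForm (k : ℕ) (hk : 1 ≤ k) (n : ℕ)
    (h : IsSpecialForm k (n : ℤ)) : iSeq n = 1 := by
  obtain ⟨ε, hε, β, hβ, heq⟩ := h
  obtain ⟨j, rfl⟩ : ∃ j, k = j + 1 := ⟨k - 1, by omega⟩
  set εb : ℕ → Bool := fun r => decide (ε r = 1) with hεb
  have hsum : (∑ r ∈ Finset.range (j + 1 - 1), ε r * (3 * 2 ^ (2 * r + 1)))
      = ∑ r ∈ Finset.range j, (if εb r then (1 : ℤ) else 0) * (3 * 2 ^ (2 * r + 1)) := by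
    simp only [Nat.add_sub_cancel]
    apply Finset.sum_congr rfl
    intro r _
    rcases hε r with h0 | h1
    · simp [hεb, h0]
    · simp [hεb, h1]
  rw [hsum, ← Inv2Aux.am_val j εb] at heq
  have hge := Inv2Aux.am_ge j εb
  have hmain := Inv2Aux.main j εb
  have hparity : inv2 n % 2 = 0 := by
    rcases hβ with h0 | h2
    · have : n = Inv2Aux.am j εb := by
        rw [h0, sub_zero] at heq
        exact_mod_cast heq
      rw [this]
      exact hmain.1
    · have : n = Inv2Aux.am j εb - 2 := by
        rw [h2] at heq
        have : (n : ℤ) + 2 = (Inv2Aux.am j εb : ℤ) := by omega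
        have h' : n + 2 = Inv2Aux.am j εb := by exact_mod_cast this
        omega
      rw [this]
      exact hmain.2.2.2
  unfold iSeq
  exact Even.neg_one_pow (Nat.even_iff.mpr hparity)
end
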